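/- Let Φ ≢ 0 be a Bernstein function, κ the measure on (0,∞) with Laplace transform Φ'(s)/Φ(s), and R(r) the Mellin transform of the remainder variable. Then for every r > 0: R(r) = Φ(1)^{r-1} · exp[ ∫_{(0,∞)} (e^{-(r-1)x} - 1 - (r-1)(e^{-x} - 1)) / (x(e^x - 1)) κ(dx) ]. -/

import Mathlib

open MeasureTheory Real Set Filter

/-- A Bernstein function, null at 0: `Φ s = a s + ∫ (1 - exp (-s x)) λ(dx)`
with `a ≥ 0` and `λ` a measure on `(0,∞)` with `∫ (x ∧ 1) λ(dx) < ∞`. -/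
def IsBernstein (Φ : ℝ → ℝ) : Prop :=
  ∃ (a : ℝ) (lam : Measure ℝ), 0 ≤ a ∧ lam (Iic 0) = 0 ∧
    (∫⁻ x, ENNReal.ofReal (min x 1) ∂lam) < ⊤ ∧
    ∀ s ≥ (0 : ℝ), Φ s = a * s + ∫ x, (1 - Real.exp (-s * x)) ∂lam

/-- A subordinator (increasing Lévy process started at 0) with
Laplace–Bernstein exponent `Φ`: stationary independent increments and
`E[exp (-s ξ_l)] = exp (-l Φ(s))`. -/
structure IsSubordinator {Ω : Type*} [MeasurableSpace Ω] (P : Measure Ω)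
    (ξ : ℝ → Ω → ℝ) (Φ : ℝ → ℝ) : Prop where
  isProb : IsProbabilityMeasure P
  meas : ∀ l, Measurable (ξ l)
  zero : ∀ᵐ ω ∂P, ξ 0 ω = 0
  mono : ∀ᵐ ω ∂P, MonotoneOn (fun l => ξ l ω) (Ici 0)
  indep : ∀ (n : ℕ) (t : Fin (n + 1) → ℝ), (∀ i, 0 ≤ t i) → Monotone t →
    ProbabilityTheory.iIndepFun
      (fun i : Fin n => fun ω => ξ (t i.succ) ω - ξ (t i.castSucc) ω) P
  laplace : ∀ t ≥ (0 : ℝ), ∀ l ≥ (0 : ℝ), ∀ s ≥ (0 : ℝ),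
    ∫ ω, Real.exp (-s * (ξ (t + l) ω - ξ t ω)) ∂P = Real.exp (-l * Φ s)

/-- The perpetuity `I = ∫₀^∞ exp (-ξ_l) dl` of a subordinator. -/
noncomputable def perpetuity {Ω : Type*} (ξ : ℝ → Ω → ℝ) (ω : Ω) : ℝ :=
  ∫ l in Ioi (0 : ℝ), Real.exp (-ξ l ω)

/-- The Mellin transform `r ↦ E[X^(r-1)]` of a positive random variable. -/
noncomputable def mellinT {Ω : Type*} [MeasurableSpace Ω] (P : Measure Ω)
    (X : Ω → ℝ) (r : ℝ) : ℝ := ∫ ω, X ω ^ (r - 1) ∂P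



section RemainderAux

variable {lam : Measure ℝ}

lemma ae_pos_of_Iic (h0 : lam (Iic 0) = 0) : ∀ᵐ x ∂lam, 0 < x := by
  rw [ae_iff]
  simp only [not_lt]; exact h0

lemma integrable_min_one (h0 : lam (Iic 0) = 0)
    (hfin : (∫⁻ x, ENNReal.ofReal (min x 1) ∂lam) < ⊤) :
    Integrable (fun x => min x 1) lam := by
  refine ⟨(measurable_id.min measurable_const).aestronglyMeasurable, ?_⟩
  rw [hasFiniteIntegral_iff_norm]
  calc ∫⁻ x, ENNReal.ofReal ‖min x 1‖ ∂lam
      = ∫⁻ x, ENNReal.ofReal (min x 1) ∂lam := lintegral_congr_ae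
        ((ae_pos_of_Iic h0).mono fun x hx => by
          simp only [Real.norm_eq_abs]
          rw [abs_of_nonneg (le_min hx.le zero_le_one)])
    _ < ⊤ := hfin

lemma integrable_of_le_min (h0 : lam (Iic 0) = 0)
    (hfin : (∫⁻ x, ENNReal.ofReal (min x 1) ∂lam) < ⊤)
    {f : ℝ → ℝ} (hf : AEStronglyMeasurable f lam) {C : ℝ}
    (hC : ∀ x, 0 < x → |f x| ≤ C * min x 1) : Integrable f lam :=
  ((integrable_min_one h0 hfin).const_mul C).mono' hf
    ((ae_pos_of_Iic h0).mono fun x hx => by simpa [Real.norm_eq_abs] using hC x hx)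

lemma bern_int_one_sub (h0 : lam (Iic 0) = 0)
    (hfin : (∫⁻ x, ENNReal.ofReal (min x 1) ∂lam) < ⊤) {s : ℝ} (hs : 0 ≤ s) :
    Integrable (fun x => 1 - Real.exp (-s * x)) lam := by
  apply integrable_of_le_min h0 hfin (C := s + 1) (Measurable.aestronglyMeasurable (by fun_prop))
  intro x hx
  have h1 : Real.exp (-s * x) ≤ 1 := Real.exp_le_one_iff.mpr (by nlinarith)
  have h2 : -s * x + 1 ≤ Real.exp (-s * x) := Real.add_one_le_exp _
  rw [abs_of_nonneg (by linarith)]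
  rcases le_total x 1 with h | h
  · rw [min_eq_left h]; nlinarith
  · rw [min_eq_right h]; nlinarith [Real.exp_pos (-s*x)]

lemma bern_int_mul_exp (h0 : lam (Iic 0) = 0)
    (hfin : (∫⁻ x, ENNReal.ofReal (min x 1) ∂lam) < ⊤) {s : ℝ} (hs : 0 < s) :
    Integrable (fun x => x * Real.exp (-s * x)) lam := by
  apply integrable_of_le_min h0 hfin (C := 1 + 1/s) (Measurable.aestronglyMeasurable (by fun_prop))
  intro x hx
  have hp : 0 < Real.exp (-s * x) := Real.exp_pos _
  have h1 : Real.exp (-s * x) ≤ 1 := Real.exp_le_one_iff.mpr (by nlinarith)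
  rw [abs_of_nonneg (by positivity)]
  rcases le_total x 1 with h | h
  · rw [min_eq_left h]
    nlinarith [mul_le_mul_of_nonneg_left h1 hx.le, mul_pos hx (Real.exp_pos (-s*x)), div_nonneg (zero_le_one) hs.le, mul_nonneg (div_nonneg zero_le_one hs.le) hx.le]
  · rw [min_eq_right h]
    have h3 : s * x ≤ Real.exp (s * x) := by nlinarith [Real.add_one_le_exp (s * x)]
    have h4 : Real.exp (s * x) * Real.exp (-s * x) = 1 := by
      rw [← Real.exp_add]; simp
    have h5 : s * x * Real.exp (-s * x) ≤ 1 := by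
      calc s * x * Real.exp (-s * x) ≤ Real.exp (s * x) * Real.exp (-s * x) :=
            mul_le_mul_of_nonneg_right h3 hp.le
        _ = 1 := h4
    have h6 : x * Real.exp (-s * x) ≤ 1 / s := by
      rw [le_div_iff₀ hs]; nlinarith
    have h7 : 0 < 1 / s := by positivity
    nlinarith

end RemainderAux
section RemainderB

variable {lam : Measure ℝ} {Φ : ℝ → ℝ} {a : ℝ}

lemma phi_zero (hrep : ∀ s ≥ (0:ℝ), Φ s = a * s + ∫ x, (1 - Real.exp (-s * x)) ∂lam) :
    Φ 0 = 0 := by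
  rw [hrep 0 le_rfl]; simp

lemma phi_mono (ha : 0 ≤ a) (h0 : lam (Iic 0) = 0)
    (hfin : (∫⁻ x, ENNReal.ofReal (min x 1) ∂lam) < ⊤)
    (hrep : ∀ s ≥ (0:ℝ), Φ s = a * s + ∫ x, (1 - Real.exp (-s * x)) ∂lam)
    {s t : ℝ} (hs : 0 ≤ s) (hst : s ≤ t) : Φ s ≤ Φ t := by
  have ht : 0 ≤ t := hs.trans hst
  rw [hrep s hs, hrep t ht]
  have hint := integral_mono_ae (bern_int_one_sub h0 hfin hs) (bern_int_one_sub h0 hfin ht)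
    ((ae_pos_of_Iic h0).mono fun x hx => by
      have : Real.exp (-t * x) ≤ Real.exp (-s * x) := Real.exp_le_exp.mpr (by nlinarith)
      simp only; linarith)
  nlinarith [mul_le_mul_of_nonneg_left hst ha]

lemma phi_concave_ineq (ha : 0 ≤ a) (h0 : lam (Iic 0) = 0)
    (hfin : (∫⁻ x, ENNReal.ofReal (min x 1) ∂lam) < ⊤)
    (hrep : ∀ s ≥ (0:ℝ), Φ s = a * s + ∫ x, (1 - Real.exp (-s * x)) ∂lam)
    {s t u v : ℝ} (hs : 0 ≤ s) (ht : 0 ≤ t) (hu : 0 ≤ u) (hv : 0 ≤ v) (huv : u + v = 1) :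
    u * Φ s + v * Φ t ≤ Φ (u * s + v * t) := by
  have hw : 0 ≤ u * s + v * t := by positivity
  rw [hrep s hs, hrep t ht, hrep _ hw]
  have key : ∀ x : ℝ, u * (1 - Real.exp (-s * x)) + v * (1 - Real.exp (-t * x))
      ≤ 1 - Real.exp (-(u * s + v * t) * x) := by
    intro x
    have hc := convexOn_exp.2 (mem_univ (-s * x)) (mem_univ (-t * x)) hu hv huv
    simp only [smul_eq_mul] at hc
    have he : u * (-s * x) + v * (-t * x) = -(u * s + v * t) * x := by ring
    rw [he] at hc
    linarith
  have hint : ∫ x, (u * (1 - Real.exp (-s * x)) + v * (1 - Real.exp (-t * x))) ∂lam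
      ≤ ∫ x, (1 - Real.exp (-(u * s + v * t) * x)) ∂lam :=
    integral_mono (((bern_int_one_sub h0 hfin hs).const_mul u).add
      ((bern_int_one_sub h0 hfin ht).const_mul v)) (bern_int_one_sub h0 hfin hw) key
  rw [integral_add ((bern_int_one_sub h0 hfin hs).const_mul u)
    ((bern_int_one_sub h0 hfin ht).const_mul v), integral_const_mul, integral_const_mul] at hint
  nlinarith

lemma phi_pos (ha : 0 ≤ a) (h0 : lam (Iic 0) = 0)
    (hfin : (∫⁻ x, ENNReal.ofReal (min x 1) ∂lam) < ⊤)
    (hrep : ∀ s ≥ (0:ℝ), Φ s = a * s + ∫ x, (1 - Real.exp (-s * x)) ∂lam)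
    (hne : ∃ s > (0:ℝ), Φ s ≠ 0) {s : ℝ} (hs : 0 < s) : 0 < Φ s := by
  obtain ⟨s₀, hs₀, hne⟩ := hne
  have h₀pos : 0 < Φ s₀ := by
    rcases (phi_zero hrep ▸ phi_mono ha h0 hfin hrep le_rfl hs₀.le).lt_or_eq with h | h
    · exact h
    · exact absurd h.symm hne
  rcases le_total s₀ s with h | h
  · exact h₀pos.trans_le (phi_mono ha h0 hfin hrep hs₀.le h)
  · have hd1 : s / s₀ ≤ 1 := (div_le_one hs₀).mpr h
    have hcon := phi_concave_ineq ha h0 hfin hrep hs₀.le le_rfl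
      (u := s / s₀) (v := 1 - s / s₀) (by positivity) (by linarith) (by ring)
    rw [phi_zero hrep] at hcon
    have harg : s / s₀ * s₀ + (1 - s / s₀) * 0 = s := by field_simp; ring
    rw [harg] at hcon
    nlinarith [mul_pos (div_pos hs hs₀) h₀pos]

lemma phi_hasDeriv (ha : 0 ≤ a) (h0 : lam (Iic 0) = 0)
    (hfin : (∫⁻ x, ENNReal.ofReal (min x 1) ∂lam) < ⊤)
    (hrep : ∀ s ≥ (0:ℝ), Φ s = a * s + ∫ x, (1 - Real.exp (-s * x)) ∂lam)
    {s : ℝ} (hs : 0 < s) :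
    HasDerivAt Φ (a + ∫ x, x * Real.exp (-s * x) ∂lam) s := by
  have main : HasDerivAt (fun t => a * t + ∫ x, (1 - Real.exp (-t * x)) ∂lam)
      (a + ∫ x, x * Real.exp (-s * x) ∂lam) s := by
    have h1 : HasDerivAt (fun t : ℝ => a * t) a s := by
      simpa using (hasDerivAt_id s).const_mul a
    have h2 : HasDerivAt (fun t => ∫ x, (1 - Real.exp (-t * x)) ∂lam)
        (∫ x, x * Real.exp (-s * x) ∂lam) s := by
      refine (hasDerivAt_integral_of_dominated_loc_of_deriv_le (F := fun t x => 1 - Real.exp (-t * x))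
        (F' := fun t x => x * Real.exp (-t * x)) (s := Metric.ball s (s / 2)) (Metric.ball_mem_nhds s (half_pos hs))
        (Eventually.of_forall fun t => Measurable.aestronglyMeasurable (by fun_prop))
        (bern_int_one_sub h0 hfin hs.le)
        (Measurable.aestronglyMeasurable (by fun_prop))
        ?_ (bern_int_mul_exp h0 hfin (half_pos hs)) ?_).2
      · filter_upwards [ae_pos_of_Iic h0] with x hx t ht
        have htlb : s / 2 < t := by
          rw [Metric.mem_ball, Real.dist_eq, abs_lt] at ht
          linarith [ht.1]
        have : Real.exp (-t * x) ≤ Real.exp (-(s / 2) * x) :=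
          Real.exp_le_exp.mpr (by nlinarith)
        rw [Real.norm_eq_abs, abs_of_nonneg (by positivity)]
        exact mul_le_mul_of_nonneg_left this hx.le
      · refine Eventually.of_forall fun x t _ => ?_
        have hd1 : HasDerivAt (fun t : ℝ => -t * x) (-1 * x) t :=
          (hasDerivAt_id t).neg.mul_const x
        have hd3 := (hd1.exp).const_sub 1
        convert hd3 using 1
        ring
    exact h1.add h2
  apply main.congr_of_eventuallyEq
  filter_upwards [Ioi_mem_nhds hs] with t ht
  exact hrep t (le_of_lt ht)

end RemainderB
section RemainderC

noncomputable def bfun (r x : ℝ) : ℝ :=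
  (Real.exp (-(r - 1) * x) - 1 - (r - 1) * (Real.exp (-x) - 1)) / (x * (Real.exp x - 1))

lemma measurable_bfun (r : ℝ) : Measurable (bfun r) := by
  unfold bfun; fun_prop

lemma exp_sub_one_pos {x : ℝ} (hx : 0 < x) : 0 < Real.exp x - 1 := by
  nlinarith [Real.exp_lt_exp.mpr hx, Real.exp_zero]

lemma bfun_convex {x : ℝ} (hx : 0 < x) {p q u v : ℝ} (hu : 0 ≤ u) (hv : 0 ≤ v)
    (huv : u + v = 1) : bfun (u * p + v * q) x ≤ u * bfun p x + v * bfun q x := by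
  have hd : 0 < x * (Real.exp x - 1) := mul_pos hx (exp_sub_one_pos hx)
  have hc := convexOn_exp.2 (mem_univ (-(p - 1) * x)) (mem_univ (-(q - 1) * x)) hu hv huv
  simp only [smul_eq_mul] at hc
  have he : u * (-(p - 1) * x) + v * (-(q - 1) * x) = -(u * p + v * q - 1) * x := by
    linear_combination x * huv
  rw [he] at hc
  unfold bfun
  rw [show u * ((Real.exp (-(p - 1) * x) - 1 - (p - 1) * (Real.exp (-x) - 1)) / (x * (Real.exp x - 1)))
      + v * ((Real.exp (-(q - 1) * x) - 1 - (q - 1) * (Real.exp (-x) - 1)) / (x * (Real.exp x - 1)))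
      = (u * (Real.exp (-(p - 1) * x) - 1 - (p - 1) * (Real.exp (-x) - 1))
        + v * (Real.exp (-(q - 1) * x) - 1 - (q - 1) * (Real.exp (-x) - 1))) / (x * (Real.exp x - 1))
      from by ring]
  rw [div_le_div_iff₀ hd hd]
  have h2 : u * (Real.exp (-(p - 1) * x) - 1 - (p - 1) * (Real.exp (-x) - 1))
      + v * (Real.exp (-(q - 1) * x) - 1 - (q - 1) * (Real.exp (-x) - 1))
      = (u * Real.exp (-(p - 1) * x) + v * Real.exp (-(q - 1) * x)) - 1
        - (u * p + v * q - 1) * (Real.exp (-x) - 1) := by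
    linear_combination (Real.exp (-x) - 2) * huv
  rw [h2]
  have h3 : Real.exp (-(u * p + v * q - 1) * x) - 1 - (u * p + v * q - 1) * (Real.exp (-x) - 1)
      ≤ (u * Real.exp (-(p - 1) * x) + v * Real.exp (-(q - 1) * x)) - 1
        - (u * p + v * q - 1) * (Real.exp (-x) - 1) := by linarith
  exact mul_le_mul_of_nonneg_right h3 hd.le

lemma bfun_bound (r : ℝ) (hr : 0 < r) :
    ∃ K : ℝ, ∀ x : ℝ, 0 < x → |bfun r x| ≤ K * Real.exp (-(min r 1) * x) := by
  set b := |r - 1| with hbdef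
  have hb0 : 0 ≤ b := abs_nonneg _
  refine ⟨Real.exp 1 * ((b ^ 2 + b) + (Real.exp b + 1 + b) * (b + 1) ^ 2) + 2 * (2 + b),
    fun x hx => ?_⟩
  set m := min r 1 with hmdef
  have hm0 : 0 < m := lt_min hr one_pos
  have hm1 : m ≤ 1 := min_le_right _ _
  have hmr : m ≤ r := min_le_left _ _
  have hex : 0 < Real.exp x - 1 := exp_sub_one_pos hx
  have hd : 0 < x * (Real.exp x - 1) := mul_pos hx hex
  have habs : |bfun r x| = |Real.exp (-(r - 1) * x) - 1 - (r - 1) * (Real.exp (-x) - 1)|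
      / (x * (Real.exp x - 1)) := by
    rw [bfun, abs_div, abs_of_pos hd]
  have hKmain : 0 ≤ Real.exp 1 * ((b ^ 2 + b) + (Real.exp b + 1 + b) * (b + 1) ^ 2) := by
    positivity
  have hxd : x * x ≤ x * (Real.exp x - 1) := by
    nlinarith [Real.add_one_le_exp x]
  rcases le_total x 1 with hx1 | hx1
  · -- x ≤ 1 : exponent mx ≤ 1
    have hemx : 1 ≤ Real.exp 1 * Real.exp (-m * x) := by
      rw [← Real.exp_add]
      have : (0:ℝ) ≤ 1 + -m * x := by nlinarith
      calc (1:ℝ) = Real.exp 0 := Real.exp_zero.symm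
        _ ≤ Real.exp (1 + -m * x) := Real.exp_le_exp.mpr this
    have hnum : |Real.exp (-(r - 1) * x) - 1 - (r - 1) * (Real.exp (-x) - 1)|
        ≤ ((b ^ 2 + b) + (Real.exp b + 1 + b) * (b + 1) ^ 2) * (x * (Real.exp x - 1)) := by
      rcases le_total (x * (b + 1)) 1 with hsm | hsm
      · -- small x : Taylor bound
        have hbx : |(-(r - 1) * x)| ≤ 1 := by
          rw [abs_mul, abs_neg, abs_of_pos hx]
          calc b * x ≤ (b + 1) * x := by nlinarith
            _ ≤ 1 := by linarith [hsm, mul_comm x (b+1)]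
        have hx1' : |(-x : ℝ)| ≤ 1 := by rw [abs_neg, abs_of_pos hx]; exact hx1
        have t1 : |Real.exp (-(r - 1) * x) - 1 - (-(r - 1) * x)| ≤ (-(r - 1) * x) ^ 2 :=
          Real.abs_exp_sub_one_sub_id_le hbx
        have t2 : |Real.exp (-x) - 1 - (-x)| ≤ (-x : ℝ) ^ 2 :=
          Real.abs_exp_sub_one_sub_id_le hx1'
        have split : Real.exp (-(r - 1) * x) - 1 - (r - 1) * (Real.exp (-x) - 1)
            = (Real.exp (-(r - 1) * x) - 1 - (-(r - 1) * x))
              - (r - 1) * (Real.exp (-x) - 1 - (-x)) := by ring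
        have habs2 : |Real.exp (-(r - 1) * x) - 1 - (r - 1) * (Real.exp (-x) - 1)|
            ≤ (-(r - 1) * x) ^ 2 + b * (-x : ℝ) ^ 2 := by
          rw [split]
          calc |(Real.exp (-(r - 1) * x) - 1 - (-(r - 1) * x))
                - (r - 1) * (Real.exp (-x) - 1 - (-x))|
              ≤ |Real.exp (-(r - 1) * x) - 1 - (-(r - 1) * x)|
                + |r - 1| * |Real.exp (-x) - 1 - (-x)| := by
                rw [← abs_mul]; exact abs_sub _ _
            _ ≤ (-(r - 1) * x) ^ 2 + b * (-x : ℝ) ^ 2 := by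
                refine add_le_add t1 ?_
                exact mul_le_mul_of_nonneg_left t2 hb0
        have hb2 : (r - 1) ^ 2 = b ^ 2 := (sq_abs _).symm
        have hsq : (-(r - 1) * x) ^ 2 + b * (-x : ℝ) ^ 2 = (b ^ 2 + b) * (x * x) := by
          linear_combination (x * x) * hb2
        have hmono : (b ^ 2 + b) * (x * x) ≤ (b ^ 2 + b) * (x * (Real.exp x - 1)) := by
          apply mul_le_mul_of_nonneg_left hxd (by positivity)
        have hextra : 0 ≤ (Real.exp b + 1 + b) * (b + 1) ^ 2 * (x * (Real.exp x - 1)) := by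
          positivity
        have hrw : ((b ^ 2 + b) + (Real.exp b + 1 + b) * (b + 1) ^ 2) * (x * (Real.exp x - 1))
            = (b ^ 2 + b) * (x * (Real.exp x - 1))
              + (Real.exp b + 1 + b) * (b + 1) ^ 2 * (x * (Real.exp x - 1)) := by ring
        rw [hrw]
        linarith
      · -- medium x : 1/(b+1) ≤ x ≤ 1
        have hxlb : 1 ≤ x * (b + 1) := hsm
        have hnum1 : |Real.exp (-(r - 1) * x) - 1 - (r - 1) * (Real.exp (-x) - 1)|
            ≤ Real.exp b + 1 + b := by
          have hE : 0 < Real.exp (-x) := Real.exp_pos _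
          have hE1 : Real.exp (-x) ≤ 1 := Real.exp_le_one_iff.mpr (by linarith)
          have e1 : Real.exp (-(r - 1) * x) ≤ Real.exp b := by
            apply Real.exp_le_exp.mpr
            calc -(r - 1) * x ≤ |(-(r-1) * x)| := le_abs_self _
              _ = b * x := by rw [abs_mul, abs_neg, abs_of_pos hx]
              _ ≤ b * 1 := by nlinarith
              _ = b := mul_one b
          have e2 : |(r - 1) * (Real.exp (-x) - 1)| ≤ b := by
            rw [abs_mul]
            calc b * |Real.exp (-x) - 1| ≤ b * 1 := by
                  apply mul_le_mul_of_nonneg_left ?_ hb0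
                  rw [abs_le]; constructor <;> linarith
              _ = b := mul_one b
          calc |Real.exp (-(r - 1) * x) - 1 - (r - 1) * (Real.exp (-x) - 1)|
              ≤ |Real.exp (-(r - 1) * x)| + 1 + |(r - 1) * (Real.exp (-x) - 1)| := by
                have := abs_sub (Real.exp (-(r - 1) * x) - 1) ((r - 1) * (Real.exp (-x) - 1))
                have h2 := abs_sub (Real.exp (-(r - 1) * x)) (1:ℝ)
                simp only [abs_one] at h2
                linarith
            _ ≤ Real.exp b + 1 + b := by
                rw [abs_of_pos (Real.exp_pos _)]
                exact add_le_add (add_le_add e1 le_rfl) e2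
        have hd2 : (1:ℝ) ≤ (b + 1) ^ 2 * (x * (Real.exp x - 1)) := by
          have h1 : (1:ℝ) * 1 ≤ (x * (b + 1)) * (x * (b + 1)) :=
            mul_le_mul hxlb hxlb zero_le_one (by positivity)
          have h2 : (x * (b + 1)) * (x * (b + 1)) = (b + 1) ^ 2 * (x * x) := by ring
          have h3 : (b + 1) ^ 2 * (x * x) ≤ (b + 1) ^ 2 * (x * (Real.exp x - 1)) :=
            mul_le_mul_of_nonneg_left hxd (by positivity)
          linarith
        have hEb : 0 < Real.exp b + 1 + b := by positivity
        have h4 := mul_le_mul_of_nonneg_left hd2 hEb.le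
        rw [mul_one] at h4
        have hrw : ((b ^ 2 + b) + (Real.exp b + 1 + b) * (b + 1) ^ 2) * (x * (Real.exp x - 1))
            = (b ^ 2 + b) * (x * (Real.exp x - 1))
              + (Real.exp b + 1 + b) * ((b + 1) ^ 2 * (x * (Real.exp x - 1))) := by ring
        rw [hrw]
        have h5 : 0 ≤ (b ^ 2 + b) * (x * (Real.exp x - 1)) := by positivity
        linarith
    -- combine for x ≤ 1
    set C : ℝ := (b ^ 2 + b) + (Real.exp b + 1 + b) * (b + 1) ^ 2 with hCdef
    have hC0 : 0 ≤ C := by positivity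
    have h1 : |Real.exp (-(r - 1) * x) - 1 - (r - 1) * (Real.exp (-x) - 1)|
        / (x * (Real.exp x - 1)) ≤ C := by
      rw [div_le_iff₀ hd]; exact hnum
    have h2 : C ≤ (Real.exp 1 * C + 2 * (2 + b)) * Real.exp (-m * x) := by
      have ha1 : C * 1 ≤ C * (Real.exp 1 * Real.exp (-m * x)) :=
        mul_le_mul_of_nonneg_left hemx hC0
      have ha2 : 0 ≤ 2 * (2 + b) * Real.exp (-m * x) := by positivity
      have ha3 : (Real.exp 1 * C + 2 * (2 + b)) * Real.exp (-m * x)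
          = C * (Real.exp 1 * Real.exp (-m * x)) + 2 * (2 + b) * Real.exp (-m * x) := by ring
      rw [ha3]; linarith
    rw [habs]
    exact h1.trans h2
  · -- x ≥ 1
    have hnum : |Real.exp (-(r - 1) * x) - 1 - (r - 1) * (Real.exp (-x) - 1)|
        ≤ (2 + b) * Real.exp ((1 - m) * x) := by
      have hE : 0 < Real.exp (-x) := Real.exp_pos _
      have hE1 : Real.exp (-x) ≤ 1 := Real.exp_le_one_iff.mpr (by linarith)
      have hone : (1:ℝ) ≤ Real.exp ((1 - m) * x) :=
        calc (1:ℝ) = Real.exp 0 := Real.exp_zero.symm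
          _ ≤ Real.exp ((1 - m) * x) := Real.exp_le_exp.mpr (by nlinarith)
      have e1 : Real.exp (-(r - 1) * x) ≤ Real.exp ((1 - m) * x) :=
        Real.exp_le_exp.mpr (by nlinarith)
      have e2 : |(r - 1) * (Real.exp (-x) - 1)| ≤ b := by
        rw [abs_mul]
        calc b * |Real.exp (-x) - 1| ≤ b * 1 := by
              apply mul_le_mul_of_nonneg_left ?_ hb0
              rw [abs_le]; constructor <;> linarith
          _ = b := mul_one b
      have htri : |Real.exp (-(r - 1) * x) - 1 - (r - 1) * (Real.exp (-x) - 1)|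
          ≤ |Real.exp (-(r - 1) * x)| + 1 + |(r - 1) * (Real.exp (-x) - 1)| := by
        have := abs_sub (Real.exp (-(r - 1) * x) - 1) ((r - 1) * (Real.exp (-x) - 1))
        have h2 := abs_sub (Real.exp (-(r - 1) * x)) (1:ℝ)
        simp only [abs_one] at h2
        linarith
      rw [abs_of_pos (Real.exp_pos _)] at htri
      have hble : b * 1 ≤ b * Real.exp ((1 - m) * x) :=
        mul_le_mul_of_nonneg_left hone hb0
      have hrw : (2 + b) * Real.exp ((1 - m) * x) = Real.exp ((1 - m) * x)
          + Real.exp ((1 - m) * x) + b * Real.exp ((1 - m) * x) := by ring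
      rw [hrw]
      rw [mul_one] at hble
      linarith
    have hdlb : Real.exp x / 2 ≤ x * (Real.exp x - 1) := by
      have h2e : (2:ℝ) ≤ Real.exp 1 := by nlinarith [Real.add_one_le_exp (1:ℝ)]
      have hxe : Real.exp 1 ≤ Real.exp x := Real.exp_le_exp.mpr hx1
      have hprod : 0 ≤ (x - 1) * (Real.exp x - 1) :=
        mul_nonneg (by linarith) (by linarith)
      nlinarith [hprod]
    rw [habs]
    have hkey : |Real.exp (-(r - 1) * x) - 1 - (r - 1) * (Real.exp (-x) - 1)|
        / (x * (Real.exp x - 1)) ≤ ((2 + b) * Real.exp ((1 - m) * x)) / (Real.exp x / 2) := by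
      apply div_le_div₀ (by positivity) hnum (by positivity) hdlb
    have heq : ((2 + b) * Real.exp ((1 - m) * x)) / (Real.exp x / 2)
        = 2 * (2 + b) * Real.exp (-m * x) := by
      rw [show (1 - m) * x = -m * x + x by ring, Real.exp_add]
      field_simp [Real.exp_ne_zero]
    rw [heq] at hkey
    have h4 : 0 ≤ Real.exp 1 * ((b ^ 2 + b) + (Real.exp b + 1 + b) * (b + 1) ^ 2)
        * Real.exp (-m * x) := by positivity
    have h5 : (Real.exp 1 * ((b ^ 2 + b) + (Real.exp b + 1 + b) * (b + 1) ^ 2) + 2 * (2 + b))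
        * Real.exp (-m * x)
        = Real.exp 1 * ((b ^ 2 + b) + (Real.exp b + 1 + b) * (b + 1) ^ 2) * Real.exp (-m * x)
          + 2 * (2 + b) * Real.exp (-m * x) := by ring
    rw [h5]
    linarith

end RemainderC
section RemainderD

lemma bfun_one (x : ℝ) : bfun 1 x = 0 := by
  simp [bfun]

lemma bfun_step {r x : ℝ} (hx : 0 < x) :
    bfun (r + 1) x - bfun r x = ∫ s in (1:ℝ)..r, Real.exp (-s * x) := by
  have hxne : x ≠ 0 := hx.ne'
  have hex : Real.exp x - 1 ≠ 0 := (exp_sub_one_pos hx).ne'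
  have hFTC : ∫ s in (1:ℝ)..r, Real.exp (-s * x)
      = (Real.exp (-(1:ℝ) * x) - Real.exp (-r * x)) / x := by
    have hder : ∀ s ∈ uIcc (1:ℝ) r, HasDerivAt (fun u => -Real.exp (-u * x) / x)
        (Real.exp (-s * x)) s := by
      intro s _
      have hd1 : HasDerivAt (fun u : ℝ => -u * x) (-1 * x) s :=
        (hasDerivAt_id s).neg.mul_const x
      have hd2 := (hd1.exp.neg).div_const x
      exact hd2.congr_deriv (by rw [div_eq_iff hxne]; ring)
    rw [intervalIntegral.integral_eq_sub_of_hasDerivAt hder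
      ((Real.continuous_exp.comp (continuous_id.neg.mul continuous_const)).intervalIntegrable 1 r)]
    ring
  rw [hFTC, bfun, bfun]
  have e1 : -(r + 1 - 1) * x = -(r - 1) * x + -x := by ring
  have e2 : -r * x = -(r - 1) * x + -x := by ring
  have e3 : -(1:ℝ) * x = -x := by ring
  rw [e1, e2, e3, Real.exp_add, Real.exp_neg]
  have hexne : Real.exp x ≠ 0 := Real.exp_ne_zero x
  field_simp
  ring
end RemainderD
section RemainderE

lemma kappa_sigmaFinite {κ : Measure ℝ} (hκ0 : κ (Iic 0) = 0)
    (hint : Integrable (fun x => Real.exp (-1 * x)) κ) : SigmaFinite κ := by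
  apply MeasureTheory.Measure.sigmaFinite_of_countable
    (S := Set.range (fun n : ℕ => Iic 0 ∪ Ioc (1 / ((n:ℝ) + 1)) ((n:ℝ) + 1)))
    (countable_range _)
  · rintro s ⟨n, rfl⟩
    have h1 : κ (Iic 0 ∪ Ioc (1 / ((n:ℝ) + 1)) ((n:ℝ) + 1))
        ≤ κ (Iic 0) + κ (Ioc (1 / ((n:ℝ) + 1)) ((n:ℝ) + 1)) := measure_union_le _ _
    have h2 : κ (Ioc (1 / ((n:ℝ) + 1)) ((n:ℝ) + 1))
        ≤ κ {x | Real.exp (-1 * ((n:ℝ) + 1)) ≤ Real.exp (-1 * x)} := by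
      apply measure_mono
      intro x hx
      exact Real.exp_le_exp.mpr (by simpa using hx.2)
    have h3 := hint.measure_ge_lt_top (Real.exp_pos (-1 * ((n:ℝ) + 1)))
    calc κ (Iic 0 ∪ Ioc (1 / ((n:ℝ) + 1)) ((n:ℝ) + 1))
        ≤ κ (Iic 0) + κ (Ioc (1 / ((n:ℝ) + 1)) ((n:ℝ) + 1)) := h1
      _ < ⊤ := by
          rw [hκ0, zero_add]
          exact lt_of_le_of_lt h2 h3
  · apply eq_univ_of_forall
    intro x
    rcases le_or_gt x 0 with hx | hx
    · exact mem_sUnion.mpr ⟨_, ⟨0, rfl⟩, Or.inl hx⟩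
    · obtain ⟨n, hn⟩ := exists_nat_gt (max x x⁻¹)
      refine mem_sUnion.mpr ⟨_, ⟨n, rfl⟩, Or.inr ⟨?_, ?_⟩⟩
      · rw [div_lt_iff₀ (by positivity)]
        have h1 : x⁻¹ < (n:ℝ) + 1 := lt_of_le_of_lt (le_max_right _ _) (by exact_mod_cast hn.trans_le (by norm_num))
        have h2 : x * x⁻¹ = 1 := mul_inv_cancel₀ hx.ne'
        nlinarith
      · have h1 : x < (n:ℝ) := lt_of_le_of_lt (le_max_left _ _) hn
        linarith

lemma swap_exp {κ : Measure ℝ} (hκ0 : κ (Iic 0) = 0)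
    (hint : ∀ s : ℝ, 0 < s → Integrable (fun x => Real.exp (-s * x)) κ)
    [SigmaFinite κ] {p q : ℝ} (hp : 0 < p) (hpq : p ≤ q) :
    ∫ x, (∫ s in p..q, Real.exp (-s * x)) ∂κ
      = ∫ s in p..q, (∫ x, Real.exp (-s * x) ∂κ) := by
  have hcont : Continuous (Function.uncurry fun (x s : ℝ) => Real.exp (-s * x)) :=
    (continuous_snd.neg.mul continuous_fst).rexp
  have hmeas : AEStronglyMeasurable (Function.uncurry fun (x s : ℝ) => Real.exp (-s * x))
      (κ.prod (volume.restrict (Ioc p q))) := hcont.aestronglyMeasurable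
  have hprod : Integrable (Function.uncurry fun (x s : ℝ) => Real.exp (-s * x))
      (κ.prod (volume.restrict (Ioc p q))) := by
    rw [integrable_prod_iff hmeas]
    constructor
    · refine Eventually.of_forall fun x => ?_
      exact (Continuous.integrableOn_Ioc (by fun_prop))
    · apply Integrable.mono' ((hint p hp).const_mul (q - p))
      · exact hmeas.norm.integral_prod_right'
      · filter_upwards [ae_pos_of_Iic hκ0] with x hx
        have hinner : ∀ s ∈ Ioc p q, ‖Real.exp (-s * x)‖ ≤ Real.exp (-p * x) := by
          intro s hs
          rw [Real.norm_eq_abs, abs_of_pos (Real.exp_pos _)]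
          exact Real.exp_le_exp.mpr (by nlinarith [hs.1, hx, hp])
        simp only [Function.uncurry_apply_pair]
        have h0 : 0 ≤ ∫ s in Ioc p q, ‖Real.exp (-s * x)‖ :=
          integral_nonneg fun s => norm_nonneg _
        rw [Real.norm_eq_abs, abs_of_nonneg h0]
        calc ∫ s in Ioc p q, ‖Real.exp (-s * x)‖
            ≤ ∫ _s in Ioc p q, Real.exp (-p * x) := by
              apply setIntegral_mono_on ?_ ?_ measurableSet_Ioc hinner
              · exact Continuous.integrableOn_Ioc (by fun_prop)
              · exact integrableOn_const (by simp [Real.volume_Ioc])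
          _ = (q - p) * Real.exp (-p * x) := by
              rw [setIntegral_const, Real.volume_real_Ioc_of_le hpq, smul_eq_mul]
  have := integral_integral_swap hprod
  rw [intervalIntegral.integral_of_le hpq]
  simp_rw [intervalIntegral.integral_of_le hpq]
  exact this

end RemainderE
section RemainderF

lemma log_funeq_unique (Φ : ℝ → ℝ) (hpos : ∀ s > (0:ℝ), 0 < Φ s)
    (hconc : ∀ n : ℕ, 1 ≤ n → (n : ℝ) * Φ ((n : ℝ) + 1) ≤ ((n : ℝ) + 1) * Φ (n : ℝ))
    (g₁ g₂ : ℝ → ℝ)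
    (hc₁ : ConvexOn ℝ (Ioi 0) g₁) (hc₂ : ConvexOn ℝ (Ioi 0) g₂)
    (h₁1 : g₁ 1 = 0) (h₂1 : g₂ 1 = 0)
    (hrec₁ : ∀ r > (0:ℝ), g₁ (r + 1) = g₁ r + Real.log (Φ r))
    (hrec₂ : ∀ r > (0:ℝ), g₂ (r + 1) = g₂ r + Real.log (Φ r)) :
    ∀ r > (0:ℝ), g₁ r = g₂ r := by
  have step : ∀ g : ℝ → ℝ, (∀ r > (0:ℝ), g (r + 1) = g r + Real.log (Φ r)) →
      ∀ (n : ℕ) (s : ℝ), 0 < s →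
        g (s + n) = g s + ∑ k ∈ Finset.range n, Real.log (Φ (s + k)) := by
    intro g hrec n
    induction n with
    | zero => intro s _; simp
    | succ n ih =>
      intro s hs
      have hcast : (s + ((n : ℕ) + 1 : ℕ) : ℝ) = (s + n) + 1 := by push_cast; ring
      rw [hcast, hrec (s + n) (by positivity), ih s hs, Finset.sum_range_succ]
      push_cast
      ring
  -- core sandwich for 0 < r < 1
  have core : ∀ r : ℝ, 0 < r → r < 1 → g₁ r = g₂ r := by
    intro r hr hr1
    have key : ∀ g : ℝ → ℝ, ConvexOn ℝ (Ioi 0) g → g 1 = 0 →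
        (∀ r > (0:ℝ), g (r + 1) = g r + Real.log (Φ r)) →
        ∀ n : ℕ, 1 ≤ n →
          r * Real.log (Φ n) ≤ g r + (∑ k ∈ Finset.range (n + 1), Real.log (Φ (r + k)))
              - (∑ k ∈ Finset.range n, Real.log (Φ (1 + k)))
          ∧ g r + (∑ k ∈ Finset.range (n + 1), Real.log (Φ (r + k)))
              - (∑ k ∈ Finset.range n, Real.log (Φ (1 + k)))
            ≤ r * Real.log (Φ ((n : ℝ) + 1)) := by
      intro g hc h1 hrec n hn
      have hnR : (1:ℝ) ≤ (n : ℝ) := by exact_mod_cast hn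
      have hval : g (r + (n + 1 : ℕ)) = g r + ∑ k ∈ Finset.range (n + 1), Real.log (Φ (r + k)) :=
        step g hrec (n + 1) r hr
      have hval2 : g (1 + (n : ℕ)) = ∑ k ∈ Finset.range n, Real.log (Φ (1 + k)) := by
        rw [step g hrec n 1 one_pos, h1, zero_add]
      have e1 : g ((n : ℝ) + 1) = g n + Real.log (Φ n) := hrec n (by linarith)
      have e2 : g ((n : ℝ) + 1 + 1) = g ((n : ℝ) + 1) + Real.log (Φ ((n : ℝ) + 1)) :=
        hrec _ (by linarith)
      have hv1 : g ((n : ℝ) + 1 + r) = g r + ∑ k ∈ Finset.range (n + 1), Real.log (Φ (r + k)) := by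
        rw [show (n : ℝ) + 1 + r = r + ((n + 1 : ℕ) : ℝ) from by push_cast; ring]
        exact hval
      have hv2 : g ((n : ℝ) + 1) = ∑ k ∈ Finset.range n, Real.log (Φ (1 + k)) := by
        rw [show (n : ℝ) + 1 = 1 + ((n : ℕ) : ℝ) from by push_cast; ring]
        exact hval2
      have m1 : (n : ℝ) ∈ Ioi (0:ℝ) := by simp only [mem_Ioi]; linarith
      have m2 : (n : ℝ) + 1 + r ∈ Ioi (0:ℝ) := by simp only [mem_Ioi]; linarith
      have m3 : (n : ℝ) + 1 ∈ Ioi (0:ℝ) := by simp only [mem_Ioi]; linarith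
      have m4 : (n : ℝ) + 1 + 1 ∈ Ioi (0:ℝ) := by simp only [mem_Ioi]; linarith
      have s1 := hc.slope_mono_adjacent m1 m2 (by linarith : (n:ℝ) < (n:ℝ) + 1)
        (by linarith : (n:ℝ) + 1 < (n:ℝ) + 1 + r)
      have s2 := hc.secant_mono m3 m2 m4
        (show (n:ℝ) + 1 + r ≠ (n:ℝ) + 1 from fun h => hr.ne' (by linarith))
        (show (n:ℝ) + 1 + 1 ≠ (n:ℝ) + 1 from fun h => by linarith) (by linarith)
      have d1 : (n : ℝ) + 1 - n = 1 := by ring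
      have d2 : (n : ℝ) + 1 + r - ((n : ℝ) + 1) = r := by ring
      have d3 : (n : ℝ) + 1 + 1 - ((n : ℝ) + 1) = 1 := by ring
      rw [d1, d2, div_one] at s1
      rw [d2, d3, div_one] at s2
      have hgdiff1 : g ((n:ℝ) + 1) - g n = Real.log (Φ n) := by rw [e1]; ring
      have hgdiff2 : g ((n:ℝ) + 1 + 1) - g ((n:ℝ) + 1) = Real.log (Φ ((n:ℝ) + 1)) := by
        rw [e2]; ring
      rw [hgdiff1] at s1
      rw [hgdiff2] at s2
      have hs1' : r * Real.log (Φ n) ≤ g ((n:ℝ) + 1 + r) - g ((n:ℝ) + 1) := by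
        rw [le_div_iff₀ hr] at s1; linarith
      have hs2' : g ((n:ℝ) + 1 + r) - g ((n:ℝ) + 1) ≤ r * Real.log (Φ ((n:ℝ) + 1)) := by
        rw [div_le_iff₀ hr] at s2; linarith
      rw [hv1, hv2] at hs1' hs2'
      exact ⟨by linarith, by linarith⟩
    have bound : ∀ n : ℕ, 1 ≤ n →
        |g₁ r - g₂ r| ≤ r * (Real.log (Φ ((n:ℝ) + 1)) - Real.log (Φ (n:ℝ))) := by
      intro n hn
      obtain ⟨l1, u1⟩ := key g₁ hc₁ h₁1 hrec₁ n hn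
      obtain ⟨l2, u2⟩ := key g₂ hc₂ h₂1 hrec₂ n hn
      rw [abs_le]
      constructor
      · rw [mul_sub]; linarith
      · rw [mul_sub]; linarith
    have hlog : ∀ n : ℕ, 1 ≤ n → Real.log (Φ ((n:ℝ) + 1)) - Real.log (Φ (n:ℝ))
        ≤ Real.log ((n:ℝ) + 1) - Real.log (n:ℝ) := by
      intro n hn
      have hn0 : (0:ℝ) < (n:ℝ) := Nat.cast_pos.mpr hn
      have h1 : 0 < Φ (n:ℝ) := hpos _ hn0
      have h2 : 0 < Φ ((n:ℝ) + 1) := hpos _ (by linarith)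
      have hcn := hconc n hn
      rw [← Real.log_div h2.ne' h1.ne', ← Real.log_div (by positivity) hn0.ne']
      apply Real.log_le_log (by positivity)
      rw [div_le_div_iff₀ h1 hn0]
      nlinarith
    have htend : Tendsto (fun n : ℕ => r * (Real.log ((n:ℝ) + 1) - Real.log (n:ℝ)))
        atTop (nhds 0) := by
      have h1 : Tendsto (fun n : ℕ => (1:ℝ) + 1 / (n:ℝ)) atTop (nhds 1) := by
        simpa using (tendsto_const_nhds (x := (1:ℝ))).add tendsto_one_div_atTop_nhds_zero_nat
      have h2 : Tendsto (fun n : ℕ => Real.log ((1:ℝ) + 1 / (n:ℝ))) atTop (nhds 0) := by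
        have := (Real.continuousAt_log (by norm_num : (1:ℝ) ≠ 0)).tendsto.comp h1
        simpa [Function.comp_def] using this
      have h3 : Tendsto (fun n : ℕ => r * Real.log ((1:ℝ) + 1 / (n:ℝ))) atTop (nhds 0) := by
        simpa using h2.const_mul r
      apply h3.congr'
      filter_upwards [eventually_ge_atTop 1] with n hn
      have hn0 : (0:ℝ) < (n:ℝ) := Nat.cast_pos.mpr hn
      congr 1
      rw [← Real.log_div (by positivity) hn0.ne']
      congr 1
      field_simp
    have hzero : |g₁ r - g₂ r| ≤ 0 := by
      apply ge_of_tendsto htend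
      filter_upwards [eventually_ge_atTop 1] with n hn
      exact (bound n hn).trans (mul_le_mul_of_nonneg_left (hlog n hn) hr.le)
    have := abs_nonpos_iff.mp hzero
    linarith
  intro r hr
  rcases lt_trichotomy r 1 with h | h | h
  · exact core r hr h
  · rw [h, h₁1, h₂1]
  · have hceil1 : 1 ≤ ⌈r⌉₊ := Nat.one_le_ceil_iff.mpr hr
    set n : ℕ := ⌈r⌉₊ - 1 with hndef
    have hncast : ((n : ℕ) : ℝ) = (⌈r⌉₊ : ℝ) - 1 := by
      rw [hndef, Nat.cast_sub hceil1, Nat.cast_one]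
    have hlt : ((n : ℕ) : ℝ) < r := by
      rw [hncast]
      have := Nat.ceil_lt_add_one (le_of_lt hr)
      linarith
    have hle : r - (n : ℝ) ≤ 1 := by
      rw [hncast]
      have := Nat.le_ceil r
      linarith
    have hs0 : (0:ℝ) < r - n := by linarith
    have hseq : g₁ (r - n) = g₂ (r - n) := by
      rcases lt_or_eq_of_le hle with hlt1 | heq1
      · exact core _ hs0 hlt1
      · rw [heq1, h₁1, h₂1]
    have h1 := step g₁ hrec₁ n (r - n) hs0
    have h2 := step g₂ hrec₂ n (r - n) hs0
    rw [show r - (n:ℝ) + (n:ℝ) = r from by ring] at h1 h2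
    rw [h1, h2, hseq]

end RemainderF

/-- Integral representation of the Mellin transform of the remainder:
`R(r) = Φ(1)^{r-1} exp[∫ (e^{-(r-1)x} - 1 - (r-1)(e^{-x}-1)) / (x(e^x-1)) κ(dx)]`,
where `κ` is the measure on `(0,∞)` with Laplace transform `Φ'/Φ`. -/
theorem remainder_mellin_integral_representation
    (Φ : ℝ → ℝ) (hΦ : IsBernstein Φ) (hΦne : ∃ s > (0 : ℝ), Φ s ≠ 0)
    (κ : Measure ℝ) (hκ0 : κ (Iic 0) = 0)
    (hκ : ∀ s > (0 : ℝ), ∫ x, Real.exp (-s * x) ∂κ = deriv Φ s / Φ s)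
    (R : ℝ → ℝ) (hRpos : ∀ r > (0 : ℝ), 0 < R r) (hR1 : R 1 = 1)
    (hReq : ∀ r > (0 : ℝ), R (r + 1) = Φ r * R r)
    (hRconv : ConvexOn ℝ (Ioi 0) (fun r => Real.log (R r))) :
    ∀ r > (0 : ℝ),
      R r = Φ 1 ^ (r - 1) *
        Real.exp (∫ x,
          (Real.exp (-(r - 1) * x) - 1 - (r - 1) * (Real.exp (-x) - 1)) /
            (x * (Real.exp x - 1)) ∂κ) := by
  obtain ⟨a, lam, ha, h0, hfin, hrep⟩ := hΦ
  have hpos : ∀ s > (0:ℝ), 0 < Φ s := fun s hs => phi_pos ha h0 hfin hrep hΦne hs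
  have hderiv_eq : ∀ s > (0:ℝ), deriv Φ s = a + ∫ x, x * Real.exp (-s * x) ∂lam :=
    fun s hs => (phi_hasDeriv ha h0 hfin hrep hs).deriv
  have hdpos : ∀ s > (0:ℝ), 0 < deriv Φ s := by
    intro s hs
    rw [hderiv_eq s hs]
    have hI : 0 ≤ ∫ x, x * Real.exp (-s * x) ∂lam :=
      integral_nonneg_of_ae ((ae_pos_of_Iic h0).mono fun x hx => by positivity)
    rcases ha.lt_or_eq with haa | haa
    · linarith
    · rcases hI.lt_or_eq with hII | hII
      · linarith
      · exfalso
        have hzero := (integral_eq_zero_iff_of_nonneg_ae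
          ((ae_pos_of_Iic h0).mono fun x hx => by positivity)
          (bern_int_mul_exp h0 hfin hs)).mp hII.symm
        have hfalse : ∀ᵐ x ∂lam, False := by
          filter_upwards [hzero, ae_pos_of_Iic h0] with x hx hxp
          have hxpos : 0 < x * Real.exp (-s * x) := by positivity
          simp only [Pi.zero_apply] at hx
          linarith
        have hlam0 : lam = 0 := by
          rw [ae_iff] at hfalse
          simp only [not_false_eq_true, setOf_true] at hfalse
          exact Measure.measure_univ_eq_zero.mp hfalse
        obtain ⟨s₀, hs₀, hΦs₀⟩ := hΦne
        apply hΦs₀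
        rw [hrep s₀ hs₀.le, hlam0]
        simp [← haa]
  have hkint : ∀ s : ℝ, 0 < s → Integrable (fun x => Real.exp (-s * x)) κ := by
    intro s hs
    by_contra hcon
    have h0' := integral_undef hcon
    rw [hκ s hs] at h0'
    exact (div_pos (hdpos s hs) (hpos s hs)).ne' h0'
  haveI : SigmaFinite κ := kappa_sigmaFinite hκ0 (hkint 1 one_pos)
  have hbint : ∀ r : ℝ, 0 < r → Integrable (bfun r) κ := by
    intro r hr
    obtain ⟨K, hK⟩ := bfun_bound r hr
    have hm : 0 < min r 1 := lt_min hr one_pos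
    exact ((hkint _ hm).const_mul K).mono' (measurable_bfun r).aestronglyMeasurable
      ((ae_pos_of_Iic hκ0).mono fun x hx => by
        simpa [Real.norm_eq_abs] using hK x hx)
  -- FTC
  have hFTC : ∀ r > (0:ℝ), (∫ s in (1:ℝ)..r, deriv Φ s / Φ s)
      = Real.log (Φ r) - Real.log (Φ 1) := by
    intro r hr
    have hsub : uIcc (1:ℝ) r ⊆ Ioi 0 := by
      intro y hy
      rw [Set.mem_uIcc] at hy
      rcases hy with ⟨h1, _⟩ | ⟨h1, _⟩ <;> simp only [mem_Ioi] <;> linarith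
    have hderivOn : ∀ y ∈ uIcc (1:ℝ) r,
        HasDerivAt (fun u => Real.log (Φ u)) (deriv Φ y / Φ y) y := by
      intro y hy
      have hy0 : (0:ℝ) < y := hsub hy
      have hD := (phi_hasDeriv ha h0 hfin hrep hy0).log (hpos y hy0).ne'
      rw [hderiv_eq y hy0]
      exact hD
    have hanti : AntitoneOn (deriv Φ) (uIcc (1:ℝ) r) := by
      intro u hu v hv huv
      rw [hderiv_eq u (hsub hu), hderiv_eq v (hsub hv)]
      have hmono := integral_mono_ae (bern_int_mul_exp h0 hfin (hsub hv))
        (bern_int_mul_exp h0 hfin (hsub hu))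
        ((ae_pos_of_Iic h0).mono fun x hx => by
          have hE : Real.exp (-v * x) ≤ Real.exp (-u * x) :=
            Real.exp_le_exp.mpr (by nlinarith [hsub hu, hsub hv])
          simp only
          exact mul_le_mul_of_nonneg_left hE hx.le)
      linarith
    have hii : IntervalIntegrable (fun y => deriv Φ y / Φ y) volume 1 r := by
      have h1 : IntervalIntegrable (deriv Φ) volume 1 r := hanti.intervalIntegrable
      have h2 : ContinuousOn (fun y => (Φ y)⁻¹) (uIcc (1:ℝ) r) := by
        intro y hy
        have hy0 : (0:ℝ) < y := hsub hy
        exact ((phi_hasDeriv ha h0 hfin hrep hy0).continuousAt.inv₀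
          (hpos y hy0).ne').continuousWithinAt
      simpa [div_eq_mul_inv] using h1.mul_continuousOn h2
    exact intervalIntegral.integral_eq_sub_of_hasDerivAt hderivOn hii
  -- swap of integrals, both orientations
  have hswap_all : ∀ r > (0:ℝ), ∫ x, (∫ s in (1:ℝ)..r, Real.exp (-s * x)) ∂κ
      = ∫ s in (1:ℝ)..r, (∫ x, Real.exp (-s * x) ∂κ) := by
    intro r hr
    rcases le_total 1 r with h | h
    · exact swap_exp hκ0 hkint one_pos h
    · have hsym := swap_exp hκ0 hkint hr h
      calc ∫ x, (∫ s in (1:ℝ)..r, Real.exp (-s * x)) ∂κ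
          = ∫ x, (-(∫ s in r..(1:ℝ), Real.exp (-s * x))) ∂κ := by
            simp_rw [intervalIntegral.integral_symm r 1]
        _ = -∫ x, (∫ s in r..(1:ℝ), Real.exp (-s * x)) ∂κ := integral_neg _
        _ = -∫ s in r..(1:ℝ), (∫ x, Real.exp (-s * x) ∂κ) := by rw [hsym]
        _ = ∫ s in (1:ℝ)..r, (∫ x, Real.exp (-s * x) ∂κ) := by
            rw [intervalIntegral.integral_symm r 1]
  have hlap : ∀ r > (0:ℝ), ∫ x, (∫ s in (1:ℝ)..r, Real.exp (-s * x)) ∂κ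
      = Real.log (Φ r) - Real.log (Φ 1) := by
    intro r hr
    rw [hswap_all r hr]
    have hcg : EqOn (fun s : ℝ => ∫ x, Real.exp (-s * x) ∂κ)
        (fun s : ℝ => deriv Φ s / Φ s) (uIcc (1:ℝ) r) := by
      intro s hs
      rw [Set.mem_uIcc] at hs
      have hs0 : (0:ℝ) < s := by rcases hs with ⟨h1, _⟩ | ⟨h1, _⟩ <;> linarith
      exact hκ s hs0
    rw [intervalIntegral.integral_congr hcg]
    exact hFTC r hr
  -- the candidate function
  set g : ℝ → ℝ := fun r => (r - 1) * Real.log (Φ 1) + ∫ x, bfun r x ∂κ with hgdef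
  have hg1 : g 1 = 0 := by
    have hzero : ∫ x, bfun 1 x ∂κ = 0 := by
      simp [bfun_one]
    simp [hgdef, hzero]
  have hgrec : ∀ r > (0:ℝ), g (r + 1) = g r + Real.log (Φ r) := by
    intro r hr
    have hdiff : ∫ x, bfun (r + 1) x ∂κ - ∫ x, bfun r x ∂κ
        = Real.log (Φ r) - Real.log (Φ 1) := by
      rw [← integral_sub (hbint _ (by linarith)) (hbint _ hr)]
      have hae : (fun x => bfun (r + 1) x - bfun r x)
          =ᵐ[κ] (fun x => ∫ s in (1:ℝ)..r, Real.exp (-s * x)) :=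
        (ae_pos_of_Iic hκ0).mono fun x hx => bfun_step hx
      rw [integral_congr_ae hae]
      exact hlap r hr
    simp only [hgdef]
    linarith
  have hconv : ConvexOn ℝ (Ioi 0) g := by
    constructor
    · exact convex_Ioi 0
    · intro p hp q hq u v hu hv huv
      simp only [smul_eq_mul]
      have hp0 : (0:ℝ) < p := hp
      have hq0 : (0:ℝ) < q := hq
      have hw : (0:ℝ) < u * p + v * q := by
        have h1 : u * min p q ≤ u * p := mul_le_mul_of_nonneg_left (min_le_left _ _) hu
        have h2 : v * min p q ≤ v * q := mul_le_mul_of_nonneg_left (min_le_right _ _) hv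
        have h3 : 0 < min p q := lt_min hp0 hq0
        nlinarith
      have hint : ∫ x, bfun (u * p + v * q) x ∂κ
          ≤ ∫ x, (u * bfun p x + v * bfun q x) ∂κ := integral_mono_ae (hbint _ hw)
        (((hbint p hp0).const_mul u).add ((hbint q hq0).const_mul v))
        ((ae_pos_of_Iic hκ0).mono fun x hx => bfun_convex hx hu hv huv)
      rw [integral_add ((hbint p hp0).const_mul u) ((hbint q hq0).const_mul v),
        integral_const_mul, integral_const_mul] at hint
      have hlin : (u * p + v * q - 1) * Real.log (Φ 1)
          = u * ((p - 1) * Real.log (Φ 1)) + v * ((q - 1) * Real.log (Φ 1)) := by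
        linear_combination Real.log (Φ 1) * huv
      simp only [hgdef]
      linarith
  have concineq : ∀ n : ℕ, 1 ≤ n → (n:ℝ) * Φ ((n:ℝ) + 1) ≤ ((n:ℝ) + 1) * Φ (n:ℝ) := by
    intro n hn
    have hn0 : (0:ℝ) < (n:ℝ) := Nat.cast_pos.mpr hn
    have hcon := phi_concave_ineq ha h0 hfin hrep (s := (n:ℝ) + 1) (t := 0)
      (u := (n:ℝ) / ((n:ℝ) + 1)) (v := 1 / ((n:ℝ) + 1))
      (by linarith) le_rfl (by positivity) (by positivity) (by field_simp)
    rw [phi_zero hrep] at hcon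
    have harg : (n:ℝ) / ((n:ℝ) + 1) * ((n:ℝ) + 1) + 1 / ((n:ℝ) + 1) * 0 = (n:ℝ) := by
      field_simp; ring
    rw [harg] at hcon
    have h2 := mul_le_mul_of_nonneg_left hcon (by positivity : (0:ℝ) ≤ (n:ℝ) + 1)
    have h3 : ((n:ℝ) + 1) * ((n:ℝ) / ((n:ℝ) + 1) * Φ ((n:ℝ) + 1) + 1 / ((n:ℝ) + 1) * 0)
        = (n:ℝ) * Φ ((n:ℝ) + 1) := by field_simp; ring
    rw [h3] at h2
    exact h2
  have main := log_funeq_unique Φ hpos concineq (fun r => Real.log (R r)) g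
    hRconv hconv (by simp [hR1]) hg1
    (fun r hr => by
      rw [hReq r hr, Real.log_mul (hpos r hr).ne' (hRpos r hr).ne']
      ring)
    hgrec
  intro r hr
  have hlogeq := main r hr
  have hRr := hRpos r hr
  have h1 : R r = Real.exp (g r) := by
    rw [← hlogeq, Real.exp_log hRr]
  rw [h1]
  simp only [hgdef]
  rw [Real.exp_add, show Real.exp ((r - 1) * Real.log (Φ 1)) = Φ 1 ^ (r - 1) from by
    rw [Real.rpow_def_of_pos (hpos 1 one_pos), mul_comm (r - 1) (Real.log (Φ 1))]]
  rfl
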